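/- Let p be a prime, a and b distinct letters, and α, β ≥ 0. Then the monoid congruence on {a,b}* generated by the single relation a^{p^α} b^{p^β} = b^{p^β} a^{p^α} is (ℤ/pℤ)-shuffle compatible: for u = a^{p^α} b^{p^β} and v = b^{p^β} a^{p^α}, the images of c(u) and c(v) in the quotient tensor square agree. -/

import Mathlib

open TensorProduct

/-- The unshuffle coproduct on the monoid algebra of the free monoid (= `K⟨A⟩`):
the unique algebra morphism (for the concatenation product) sending each letter `a`
to `a ⊗ 1 + 1 ⊗ a`. -/
noncomputable def unshuffle (K A : Type*) [CommSemiring K] :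
    MonoidAlgebra K (FreeMonoid A) →ₐ[K]
      MonoidAlgebra K (FreeMonoid A) ⊗[K] MonoidAlgebra K (FreeMonoid A) :=
  MonoidAlgebra.lift K _ (FreeMonoid A)
    (FreeMonoid.lift fun a =>
      (MonoidAlgebra.of K (FreeMonoid A) (FreeMonoid.of a)) ⊗ₜ[K] 1
        + 1 ⊗ₜ[K] (MonoidAlgebra.of K (FreeMonoid A) (FreeMonoid.of a)))

/-- The word `l` viewed as an element of `K⟨A⟩`. -/
noncomputable def wd {K : Type*} {A : Type*} [CommSemiring K] (l : List A) :
    MonoidAlgebra K (FreeMonoid A) :=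
  MonoidAlgebra.of K (FreeMonoid A) (FreeMonoid.ofList l)

/-- `P` is primitive for the unshuffle coproduct: `c(P) = P ⊗ 1 + 1 ⊗ P`. -/
def IsPrimitive {K A : Type*} [CommSemiring K] (P : MonoidAlgebra K (FreeMonoid A)) : Prop :=
  unshuffle K A P = P ⊗ₜ[K] 1 + 1 ⊗ₜ[K] P

/-- The natural algebra morphism `K⟨A⟩ → K[A*/≡]` induced by a monoid congruence. -/
noncomputable def natHom (K : Type*) {A : Type*} [CommSemiring K] (c : Con (FreeMonoid A)) :
    MonoidAlgebra K (FreeMonoid A) →ₐ[K] MonoidAlgebra K c.Quotient :=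
  MonoidAlgebra.mapDomainAlgHom K K c.mk'

/-- A congruence `≡` on `A*` is `K`-shuffle compatible if the unshuffle coproduct descends
to the quotient, i.e. `u ≡ v` implies `(nat ⊗ nat)(c u) = (nat ⊗ nat)(c v)`. -/
def ShuffleCompat (K : Type*) {A : Type*} [CommSemiring K] (c : Con (FreeMonoid A)) : Prop :=
  ∀ u v : FreeMonoid A, c u v →
    (Algebra.TensorProduct.map (natHom K c) (natHom K c))
        (unshuffle K A (MonoidAlgebra.of K (FreeMonoid A) u))
      = (Algebra.TensorProduct.map (natHom K c) (natHom K c))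
        (unshuffle K A (MonoidAlgebra.of K (FreeMonoid A) v))

/-- Freshman's dream in a `ZMod p`-algebra for commuting elements. -/
lemma zmod_add_pow_char_pow {p : ℕ} (hp : p.Prime) {R : Type*} [Semiring R]
    [Algebra (ZMod p) R] {x y : R} (h : Commute x y) (n : ℕ) :
    (x + y) ^ p ^ n = x ^ p ^ n + y ^ p ^ n := by
  obtain ⟨r, hr⟩ := h.exists_add_pow_prime_pow_eq hp n
  have hp0 : (p : R) = 0 := by
    rw [← map_natCast (algebraMap (ZMod p) R) p, ZMod.natCast_self, map_zero]
  rw [hr, hp0, zero_mul, zero_mul, zero_mul, add_zero]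

lemma ofList_replicate_eq_pow {A : Type*} (n : ℕ) (x : A) :
    FreeMonoid.ofList (List.replicate n x) = FreeMonoid.of x ^ n := by
  induction n with
  | zero => rfl
  | succ n ih =>
    rw [List.replicate_succ, ← List.singleton_append, FreeMonoid.ofList_append, ih, pow_succ']
    rfl

lemma natHom_of {K A : Type*} [CommSemiring K] (c : Con (FreeMonoid A)) (w : FreeMonoid A) :
    natHom K c (MonoidAlgebra.of K (FreeMonoid A) w)
      = MonoidAlgebra.of K c.Quotient (c.mk' w) := by
  simp [natHom, MonoidAlgebra.of_apply, Finsupp.mapDomain_single]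

/-- for `p` prime, distinct letters `a ≠ b` and `α, β ≥ 0`, the congruence
generated by the single relation `a^(p^α) b^(p^β) = b^(p^β) a^(p^α)` is
`ℤ/pℤ`-shuffle compatible. -/
theorem pLC_shuffle_compatible {A : Type*} (p : ℕ) (hp : p.Prime)
    (a b : A) (hab : a ≠ b) (α β : ℕ) :
    ShuffleCompat (ZMod p) (conGen (fun x y : FreeMonoid A =>
      x = FreeMonoid.ofList (List.replicate (p ^ α) a ++ List.replicate (p ^ β) b) ∧
      y = FreeMonoid.ofList (List.replicate (p ^ β) b ++ List.replicate (p ^ α) a))) := by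
  intro u v huv
  set K := ZMod p with hK
  set r := (fun x y : FreeMonoid A =>
      x = FreeMonoid.ofList (List.replicate (p ^ α) a ++ List.replicate (p ^ β) b) ∧
      y = FreeMonoid.ofList (List.replicate (p ^ β) b ++ List.replicate (p ^ α) a)) with hr
  set cc : Con (FreeMonoid A) := conGen r with hcc
  -- The composite monoid homomorphism `A* → (K[A*/≡])^{⊗2}`
  let G : MonoidAlgebra K (FreeMonoid A) →ₐ[K]
      MonoidAlgebra K cc.Quotient ⊗[K] MonoidAlgebra K cc.Quotient :=
    (Algebra.TensorProduct.map (natHom K cc) (natHom K cc)).comp (unshuffle K A)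
  let F : FreeMonoid A →* (MonoidAlgebra K cc.Quotient ⊗[K] MonoidAlgebra K cc.Quotient) :=
    G.toRingHom.toMonoidHom.comp (MonoidAlgebra.of K (FreeMonoid A))
  suffices h : F u = F v by exact h
  refine (Con.ker_rel F).mp (Con.conGen_le.mpr ?_ huv)
  rintro x y ⟨rfl, rfl⟩
  rw [Con.ker_rel]
  -- notation
  set U : FreeMonoid A := FreeMonoid.of a with hU
  set V : FreeMonoid A := FreeMonoid.of b with hV
  set X : MonoidAlgebra K cc.Quotient :=
    MonoidAlgebra.of K cc.Quotient (cc.mk' U) with hX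
  set Y : MonoidAlgebra K cc.Quotient :=
    MonoidAlgebra.of K cc.Quotient (cc.mk' V) with hY
  -- F on a single letter
  have hFof : ∀ x : A, F (FreeMonoid.of x)
      = (MonoidAlgebra.of K cc.Quotient (cc.mk' (FreeMonoid.of x))) ⊗ₜ[K] 1
        + 1 ⊗ₜ[K] (MonoidAlgebra.of K cc.Quotient (cc.mk' (FreeMonoid.of x))) := by
    intro x
    show (Algebra.TensorProduct.map (natHom K cc) (natHom K cc))
        (unshuffle K A (MonoidAlgebra.of K (FreeMonoid A) (FreeMonoid.of x))) = _
    rw [unshuffle, MonoidAlgebra.lift_of, FreeMonoid.lift_eval_of, map_add,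
      Algebra.TensorProduct.map_tmul, Algebra.TensorProduct.map_tmul, map_one, natHom_of]
  -- F on a replicated word
  have hFrep : ∀ (n : ℕ) (x : A), F (FreeMonoid.ofList (List.replicate n x))
      = ((MonoidAlgebra.of K cc.Quotient (cc.mk' (FreeMonoid.of x))) ⊗ₜ[K] 1
        + 1 ⊗ₜ[K] (MonoidAlgebra.of K cc.Quotient (cc.mk' (FreeMonoid.of x)))) ^ n := by
    intro n x
    rw [ofList_replicate_eq_pow, map_pow, hFof]
  -- the commuting relation in the quotient
  have hcomm : X ^ p ^ α * Y ^ p ^ β = Y ^ p ^ β * X ^ p ^ α := by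
    have hrel : cc (FreeMonoid.ofList (List.replicate (p ^ α) a ++ List.replicate (p ^ β) b))
        (FreeMonoid.ofList (List.replicate (p ^ β) b ++ List.replicate (p ^ α) a)) := by
      rw [hcc]
      exact ConGen.Rel.of _ _ ⟨rfl, rfl⟩
    have hmk : cc.mk' (FreeMonoid.ofList (List.replicate (p ^ α) a ++ List.replicate (p ^ β) b))
        = cc.mk' (FreeMonoid.ofList (List.replicate (p ^ β) b ++ List.replicate (p ^ α) a)) :=
      (Con.eq cc).mpr hrel
    simp only [FreeMonoid.ofList_append, ofList_replicate_eq_pow, map_mul, map_pow] at hmk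
    rw [hX, hY, ← map_pow (MonoidAlgebra.of K cc.Quotient) (cc.mk' U) (p ^ α),
      ← map_pow (MonoidAlgebra.of K cc.Quotient) (cc.mk' V) (p ^ β),
      ← map_mul, ← map_mul, hmk]
  -- tmul commutation
  have hC : ∀ z : MonoidAlgebra K cc.Quotient,
      Commute (z ⊗ₜ[K] (1 : MonoidAlgebra K cc.Quotient)) ((1 : MonoidAlgebra K cc.Quotient) ⊗ₜ[K] z) := by
    intro z
    show _ = _
    rw [Algebra.TensorProduct.tmul_mul_tmul, Algebra.TensorProduct.tmul_mul_tmul,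
      mul_one, one_mul]
  -- freshman's dream
  have hfr : ∀ (z : MonoidAlgebra K cc.Quotient) (n : ℕ),
      (z ⊗ₜ[K] (1 : MonoidAlgebra K cc.Quotient) + 1 ⊗ₜ[K] z) ^ p ^ n
        = (z ^ p ^ n) ⊗ₜ[K] 1 + 1 ⊗ₜ[K] (z ^ p ^ n) := by
    intro z n
    rw [zmod_add_pow_char_pow hp (hC z) n, Algebra.TensorProduct.tmul_pow,
      Algebra.TensorProduct.tmul_pow, one_pow]
  -- expand products
  have expand : ∀ (x y : MonoidAlgebra K cc.Quotient),
      (x ⊗ₜ[K] 1 + 1 ⊗ₜ[K] x) * (y ⊗ₜ[K] 1 + 1 ⊗ₜ[K] y)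
        = (x * y) ⊗ₜ[K] 1 + x ⊗ₜ[K] y + y ⊗ₜ[K] x + 1 ⊗ₜ[K] (x * y) := by
    intro x y
    simp only [add_mul, mul_add, Algebra.TensorProduct.tmul_mul_tmul, mul_one, one_mul]
    abel
  calc F (FreeMonoid.ofList (List.replicate (p ^ α) a ++ List.replicate (p ^ β) b))
      = (X ^ p ^ α * Y ^ p ^ β) ⊗ₜ[K] 1 + (X ^ p ^ α) ⊗ₜ[K] (Y ^ p ^ β)
          + (Y ^ p ^ β) ⊗ₜ[K] (X ^ p ^ α) + 1 ⊗ₜ[K] (X ^ p ^ α * Y ^ p ^ β) := by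
        rw [FreeMonoid.ofList_append, map_mul, hFrep, hFrep, ← hX, ← hY, hfr, hfr, expand]
    _ = (Y ^ p ^ β * X ^ p ^ α) ⊗ₜ[K] 1 + (Y ^ p ^ β) ⊗ₜ[K] (X ^ p ^ α)
          + (X ^ p ^ α) ⊗ₜ[K] (Y ^ p ^ β) + 1 ⊗ₜ[K] (Y ^ p ^ β * X ^ p ^ α) := by
        rw [hcomm]; abel
    _ = F (FreeMonoid.ofList (List.replicate (p ^ β) b ++ List.replicate (p ^ α) a)) := by
        rw [FreeMonoid.ofList_append, map_mul, hFrep, hFrep, ← hX, ← hY, hfr, hfr, expand]
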